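/- Let β ⊆ α be compositions with N = |α|−|β| ≥ 1. Then, as formal power series in the variables x_1, x_2, … with rational coefficients, Σ_{T ∈ SIT(α/β)} F_{comp(Des_{Ā*}(T))} = Σ_T x^T, where the right-hand sum runs over all fillings T of the cells of the skew diagram α/β with positive integers such that the entries in the cells of column 1 lying in α/β strictly increase from bottom to top and the entries of every row strictly increase from left to right. -/

import Mathlib

open scoped Classical

namespace ImmaculateSkew

/-- `part α i` is the `i`-th part (0-indexed) of the composition `α`, or `0` if out of range. -/
def part (α : List ℕ) (i : ℕ) : ℕ := α.getD i 0

/-- a composition: a list of positive integers -/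
def IsComposition (α : List ℕ) : Prop := ∀ x ∈ α, 0 < x

/-- `β ⊆ α` for compositions -/
def SubComp (β α : List ℕ) : Prop :=
  β.length ≤ α.length ∧ ∀ j < β.length, part β j ≤ part α j

/-- cell `(i, j)` (row `i` from the bottom, column `j`, both 0-indexed) lies in the diagram of `α` -/
def InDiagram (α : List ℕ) (c : ℕ × ℕ) : Prop :=
  c.1 < α.length ∧ c.2 < part α c.1

/-- cell lies in the skew diagram `α/β` -/
def InSkew (α β : List ℕ) (c : ℕ × ℕ) : Prop :=
  InDiagram α c ∧ ¬ InDiagram β c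

/-- the finite set of cells of the skew diagram `α/β` -/
noncomputable def skewCells (α β : List ℕ) : Finset (ℕ × ℕ) :=
  (Finset.range α.length ×ˢ Finset.range (α.sum + 1)).filter (InSkew α β)

/-- `N = |α| - |β|` -/
def skewSize (α β : List ℕ) : ℕ := α.sum - β.sum

/-- a filling of the cells of `α/β` using each entry of `E` exactly once, zero off the diagram -/
structure IsStdOn (α β : List ℕ) (E : Finset ℕ) (T : ℕ × ℕ → ℕ) : Prop where
  zero_off : ∀ c, ¬ InSkew α β c → T c = 0
  mem : ∀ c, InSkew α β c → T c ∈ E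
  inj : ∀ c c', InSkew α β c → InSkew α β c' → T c = T c' → c = c'
  surj : ∀ v ∈ E, ∃ c, InSkew α β c ∧ T c = v

/-- row entries strictly increase left to right -/
def RowsStrict (α β : List ℕ) (T : ℕ × ℕ → ℕ) : Prop :=
  ∀ i j j', j < j' → InSkew α β (i, j) → InSkew α β (i, j') → T (i, j) < T (i, j')

/-- row entries weakly increase left to right -/
def RowsWeak (α β : List ℕ) (T : ℕ × ℕ → ℕ) : Prop :=
  ∀ i j j', j < j' → InSkew α β (i, j) → InSkew α β (i, j') → T (i, j) ≤ T (i, j')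

/-- all column entries strictly increase bottom to top -/
def ColsStrict (α β : List ℕ) (T : ℕ × ℕ → ℕ) : Prop :=
  ∀ i i' j, i < i' → InSkew α β (i, j) → InSkew α β (i', j) → T (i, j) < T (i', j)

/-- all column entries weakly increase bottom to top -/
def ColsWeak (α β : List ℕ) (T : ℕ × ℕ → ℕ) : Prop :=
  ∀ i i' j, i < i' → InSkew α β (i, j) → InSkew α β (i', j) → T (i, j) ≤ T (i', j)

/-- the column-1 entries (those in `α/β`) strictly increase bottom to top -/
def FirstColStrict (α β : List ℕ) (T : ℕ × ℕ → ℕ) : Prop :=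
  ∀ i i', i < i' → InSkew α β (i, 0) → InSkew α β (i', 0) → T (i, 0) < T (i', 0)

/-- the column-1 entries (those in `α/β`) weakly increase bottom to top -/
def FirstColWeak (α β : List ℕ) (T : ℕ × ℕ → ℕ) : Prop :=
  ∀ i i', i < i' → InSkew α β (i, 0) → InSkew α β (i', 0) → T (i, 0) ≤ T (i', 0)

/-- standard immaculate tableau of shape `α/β` with entry set `E` -/
def IsSITOn (α β : List ℕ) (E : Finset ℕ) (T : ℕ × ℕ → ℕ) : Prop :=
  IsStdOn α β E T ∧ RowsStrict α β T ∧ FirstColStrict α β T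

/-- standard immaculate tableau of shape `α/β` (entries `1, …, N`) -/
def IsSIT (α β : List ℕ) (T : ℕ × ℕ → ℕ) : Prop :=
  IsSITOn α β (Finset.Icc 1 (skewSize α β)) T

/-- standard extended tableau: all columns increase bottom to top -/
def IsSET (α β : List ℕ) (T : ℕ × ℕ → ℕ) : Prop :=
  IsSIT α β T ∧ ColsStrict α β T

/-- the four descent-set variants -/
inductive Variant | dI | rdI | Astar | Abar

/-- `rowRel a r r'`: the relation required between the row `r` containing `i` and the row `r'`
containing `i+1` for `i` to be an `a`-descent -/
def rowRel : Variant → ℕ → ℕ → Prop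
  | .dI    => fun r r' => r < r'
  | .rdI   => fun r r' => r' ≤ r
  | .Astar => fun r r' => r' < r
  | .Abar  => fun r r' => r ≤ r'

/-- the `a`-descent set of a tableau -/
noncomputable def Des (a : Variant) (α β : List ℕ) (T : ℕ × ℕ → ℕ) : Finset ℕ :=
  (Finset.Icc 1 (skewSize α β - 1)).filter fun k =>
    ∃ c c', InSkew α β c ∧ InSkew α β c' ∧ T c = k ∧ T c' = k + 1 ∧ rowRel a c.1 c'.1

/-- interchange the entries `i` and `i+1` -/
def swapEntries (i : ℕ) (T : ℕ × ℕ → ℕ) : ℕ × ℕ → ℕ :=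
  fun c => if T c = i then i + 1 else if T c = i + 1 then i else T c

/-- the 0-Hecke operator `π_i^a` on `SIT(α/β) ∪ {0}` (the zero function plays the role of `0`) -/
noncomputable def piOp (a : Variant) (α β : List ℕ) (i : ℕ) (T : ℕ × ℕ → ℕ) : ℕ × ℕ → ℕ :=
  if i ∈ Des a α β T then
    (if IsSIT α β (swapEntries i T) then swapEntries i T else fun _ => 0)
  else T

/-- the fundamental quasisymmetric function `F_{comp(D)}` for `D ⊆ {1,…,N-1}`, as a power
series in the variables `x_1, x_2, …` (variable `x_n` is `X n`; `x_0` is unused) -/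
noncomputable def Fund (N : ℕ) (D : Finset ℕ) : MvPowerSeries ℕ ℚ :=
  fun d => (Nat.card {f : Fin N → ℕ //
    (∀ j, 1 ≤ f j) ∧
    (∀ j k : Fin N, j ≤ k → f j ≤ f k) ∧
    (∀ (j : ℕ) (_ : 1 ≤ j) (h2 : j < N), j ∈ D → f ⟨j - 1, by omega⟩ < f ⟨j, h2⟩) ∧
    (∑ j, Finsupp.single (f j) 1) = d} : ℚ)

/-- the generating function `Σ_T x^T` over all fillings of the given cells with positive
integers satisfying the predicate `P` (and equal to `0` off the given cells) -/
noncomputable def genF (cs : Finset (ℕ × ℕ)) (P : (ℕ × ℕ → ℕ) → Prop) :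
    MvPowerSeries ℕ ℚ :=
  fun d => (Nat.card {T : ℕ × ℕ → ℕ //
    (∀ c, c ∉ cs → T c = 0) ∧ (∀ c ∈ cs, 1 ≤ T c) ∧ P T ∧
    (∑ c ∈ cs, Finsupp.single (T c) 1) = d} : ℚ)

/-- complete homogeneous symmetric function `h_r` -/
noncomputable def hFun (r : ℕ) : MvPowerSeries ℕ ℚ :=
  fun d => (Nat.card {f : Fin r → ℕ //
    (∀ j, 1 ≤ f j) ∧ (∀ j k : Fin r, j ≤ k → f j ≤ f k) ∧
    (∑ j, Finsupp.single (f j) 1) = d} : ℚ)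

/-- elementary symmetric function `e_r` -/
noncomputable def eFun (r : ℕ) : MvPowerSeries ℕ ℚ :=
  fun d => (Nat.card {f : Fin r → ℕ //
    (∀ j, 1 ≤ f j) ∧ (∀ j k : Fin r, j < k → f j < f k) ∧
    (∑ j, Finsupp.single (f j) 1) = d} : ℚ)

/-- send a filling to the corresponding basis vector of the free `ℚ`-vector space on
`SIT(α/β)`, or to the zero vector if it is not a standard immaculate tableau -/
noncomputable def toBasis (α β : List ℕ) (U : ℕ × ℕ → ℕ) :
    ({T : ℕ × ℕ → ℕ // IsSIT α β T} →₀ ℚ) :=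
  if h : IsSIT α β U then Finsupp.single ⟨U, h⟩ 1 else 0

/-- the linear extension of `π_i^a` to the free `ℚ`-vector space on `SIT(α/β)` -/
noncomputable def piLin (a : Variant) (α β : List ℕ) (i : ℕ) :
    ({T : ℕ × ℕ → ℕ // IsSIT α β T} →₀ ℚ) →ₗ[ℚ]
      ({T : ℕ × ℕ → ℕ // IsSIT α β T} →₀ ℚ) :=
  Finsupp.lift _ ℚ _ (fun T => toBasis α β (piOp a α β i T.1))

/-- one step: the tableau `T` is obtained from `S` by applying one operator `π_i^a` -/
def stepRel (a : Variant) (α β : List ℕ) (S T : ℕ × ℕ → ℕ) : Prop :=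
  IsSIT α β T ∧ ∃ i, 1 ≤ i ∧ i ≤ skewSize α β - 1 ∧ piOp a α β i S = T

/-- `T` is obtained from `S` by applying a (possibly empty) sequence of operators `π_i^a`,
all intermediate results being tableaux -/
def reach (a : Variant) (α β : List ℕ) : (ℕ × ℕ → ℕ) → (ℕ × ℕ → ℕ) → Prop :=
  Relation.ReflTransGen (stepRel a α β)

/-- the number of skew cells of `α/β` strictly above row `i` other than column-1 cells -/
noncomputable def aboveCount (α β : List ℕ) (i : ℕ) : ℕ :=
  ∑ i' ∈ Finset.Ico (i + 1) α.length,
    (if i' < β.length then part α i' - part β i' else part α i' - 1)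

/-- the tableau `S^0_{α/β}`: the column-1 cells of `α/β` are filled with `1, …, ℓ(α)-ℓ(β)`
bottom to top, then the remaining cells are filled row by row, top to bottom, left to right,
with consecutive integers -/
noncomputable def S0 (α β : List ℕ) : ℕ × ℕ → ℕ :=
  fun c =>
    if InSkew α β c then
      if c.2 = 0 ∧ β.length ≤ c.1 then c.1 - β.length + 1
      else (α.length - β.length) + aboveCount α β c.1 +
        (if c.1 < β.length then c.2 - part β c.1 + 1 else c.2)
    else 0

/-- the row superstandard tableau `S^{row}_{α/β}`: rows filled left to right with `1, 2, …, N`,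
bottom row first -/
noncomputable def Srow (α β : List ℕ) : ℕ × ℕ → ℕ :=
  fun c =>
    if InSkew α β c then
      (∑ i' ∈ Finset.range c.1, (part α i' - part β i')) + (c.2 - part β c.1 + 1)
    else 0

/-- `c` is read before `c'` in the reading word (rows top to bottom, right to left in a row) -/
def readBefore (c c' : ℕ × ℕ) : Prop :=
  c'.1 < c.1 ∨ (c.1 = c'.1 ∧ c'.2 < c.2)

/-- the number of inversions of the reading word of a tableau of shape `α/β` -/
noncomputable def invNum (α β : List ℕ) (T : ℕ × ℕ → ℕ) : ℕ :=
  ((skewCells α β ×ˢ skewCells α β).filter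
    (fun p => readBefore p.1 p.2 ∧ T p.2 < T p.1)).card

/-- `φ_U(T)`: fill the cells of `β` by `U` and those of `α/β` by `T` with all entries of `T`
shifted up by `m = |β|` -/
noncomputable def phiU (α β : List ℕ) (U T : ℕ × ℕ → ℕ) : ℕ × ℕ → ℕ :=
  fun c => if InDiagram β c then U c else if InSkew α β c then T c + β.sum else 0

/-- restriction `T_{≤ m}` of `T` to entries `≤ m` -/
def restrLe (m : ℕ) (T : ℕ × ℕ → ℕ) : ℕ × ℕ → ℕ :=
  fun c => if T c ≤ m then T c else 0

/-- restriction `T_{> m}` of `T` to entries `> m` -/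
def restrGt (m : ℕ) (T : ℕ × ℕ → ℕ) : ℕ × ℕ → ℕ :=
  fun c => if m < T c then T c else 0

/-- standardisation `std(T_{>m})`: keep the entries `> m` and subtract `m` from each -/
def stdGt (m : ℕ) (T : ℕ × ℕ → ℕ) : ℕ × ℕ → ℕ :=
  fun c => if m < T c then T c - m else 0

/-- `T ∈ X_{α,β}`: `T ∈ SIT(α)` and the entries `> |β|` of `T` occupy exactly the cells
of `α/β` -/
def memX (α β : List ℕ) (T : ℕ × ℕ → ℕ) : Prop :=
  IsSIT α [] T ∧ ∀ c, InDiagram α c → (β.sum < T c ↔ ¬ InDiagram β c)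

section Aux

lemma part_eq_zero {l : List ℕ} {i : ℕ} (h : l.length ≤ i) : part l i = 0 := by
  simp [part, List.getD, List.getElem?_eq_none h]

lemma part_le_sum (α : List ℕ) {i : ℕ} (h : i < α.length) : part α i ≤ α.sum := by
  have : part α i ∈ α := by
    rw [part, List.getD_eq_getElem _ _ h]
    exact List.getElem_mem h
  exact List.single_le_sum (fun x _ => Nat.zero_le x) _ this

lemma mem_skewCells {α β : List ℕ} {c : ℕ × ℕ} :
    c ∈ skewCells α β ↔ InSkew α β c := by
  simp only [skewCells, Finset.mem_filter, Finset.mem_product, Finset.mem_range]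
  constructor
  · exact fun h => h.2
  · intro h
    exact ⟨⟨h.1.1, lt_of_lt_of_le h.1.2 (by
      have := part_le_sum α h.1.1; omega)⟩, h⟩

lemma inSkew_iff {α β : List ℕ} {c : ℕ × ℕ} :
    InSkew α β c ↔ c.1 < α.length ∧ part β c.1 ≤ c.2 ∧ c.2 < part α c.1 := by
  unfold InSkew InDiagram
  constructor
  · rintro ⟨⟨h1, h2⟩, h3⟩
    refine ⟨h1, ?_, h2⟩
    by_cases hb : c.1 < β.length
    · push_neg at h3
      exact h3 hb
    · push_neg at hb
      rw [part_eq_zero hb]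
      exact Nat.zero_le _
  · rintro ⟨h1, h2, h3⟩
    refine ⟨⟨h1, h3⟩, ?_⟩
    rintro ⟨hb, hlt⟩
    omega

lemma list_sum_eq (l : List ℕ) : l.sum = ∑ i ∈ Finset.range l.length, part l i := by
  induction l with
  | nil => simp
  | cons a t ih =>
    rw [List.sum_cons, List.length_cons, Finset.sum_range_succ']
    simp only [part] at *
    simp [ih, add_comm]

lemma part_le_part {α β : List ℕ} (hsub : SubComp β α) (i : ℕ) :
    part β i ≤ part α i := by
  by_cases hb : i < β.length
  · exact hsub.2 i hb
  · push_neg at hb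
    rw [part_eq_zero hb]
    exact Nat.zero_le _

lemma card_skewCells {α β : List ℕ} (hsub : SubComp β α) :
    (skewCells α β).card = skewSize α β := by
  have hdecomp : skewCells α β =
      (Finset.range α.length).biUnion
        (fun i => (Finset.Ico (part β i) (part α i)).image (Prod.mk i)) := by
    ext ⟨i, j⟩
    simp only [mem_skewCells, inSkew_iff, Finset.mem_biUnion, Finset.mem_range,
      Finset.mem_image, Finset.mem_Ico, Prod.mk.injEq]
    constructor
    · rintro ⟨h1, h2, h3⟩
      exact ⟨i, h1, j, ⟨h2, h3⟩, rfl, rfl⟩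
    · rintro ⟨i', hi', j', ⟨hj1, hj2⟩, rfl, rfl⟩
      exact ⟨hi', hj1, hj2⟩
  rw [hdecomp, Finset.card_biUnion]
  · have hterm : ∀ i,
        ((Finset.Ico (part β i) (part α i)).image (Prod.mk i)).card
          = part α i - part β i := by
      intro i
      rw [Finset.card_image_of_injective _ (fun a b h => by injection h), Nat.card_Ico]
    simp only [hterm]
    have hβsum : ∑ i ∈ Finset.range β.length, part β i
        = ∑ i ∈ Finset.range α.length, part β i :=
      Finset.sum_subset (Finset.range_subset_range.2 hsub.1)
        (fun i _ hi => part_eq_zero (by simpa using hi))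
    have key : (∑ i ∈ Finset.range α.length, (part α i - part β i))
        + ∑ i ∈ Finset.range α.length, part β i
        = ∑ i ∈ Finset.range α.length, part α i := by
      rw [← Finset.sum_add_distrib]
      exact Finset.sum_congr rfl fun i _ => Nat.sub_add_cancel (part_le_part hsub i)
    rw [skewSize, list_sum_eq α, list_sum_eq β, hβsum]
    omega
  · intro x hx y hy hxy
    simp only [Finset.disjoint_left, Finset.mem_image]
    rintro c ⟨j, _, rfl⟩ ⟨j', _, h⟩
    have := congrArg Prod.fst h
    exact hxy this.symm

end Aux


section Rank

/-- lexicographic key: compare first by entry, then by *decreasing* row -/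
def key (L : ℕ) (T : ℕ × ℕ → ℕ) (c : ℕ × ℕ) : ℕ := T c * (L + 1) + (L - c.1)

lemma key_lt_iff {L : ℕ} {T : ℕ × ℕ → ℕ} {c c' : ℕ × ℕ}
    (hc : c.1 < L) (hc' : c'.1 < L) :
    key L T c < key L T c' ↔ T c < T c' ∨ (T c = T c' ∧ c'.1 < c.1) := by
  unfold key
  rcases lt_trichotomy (T c) (T c') with h | h | h
  · simp only [h, true_or, iff_true]
    calc T c * (L+1) + (L - c.1) < T c * (L+1) + (L+1) := by omega
    _ = (T c + 1) * (L+1) := by ring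
    _ ≤ T c' * (L+1) := Nat.mul_le_mul_right _ h
    _ ≤ T c' * (L+1) + (L - c'.1) := Nat.le_add_right _ _
  · rw [h]
    omega
  · have : T c' * (L+1) + (L - c'.1) < T c * (L+1) + (L - c.1) := by
      calc T c' * (L+1) + (L - c'.1) < T c' * (L+1) + (L+1) := by omega
      _ = (T c' + 1) * (L+1) := by ring
      _ ≤ T c * (L+1) := Nat.mul_le_mul_right _ h
      _ ≤ T c * (L+1) + (L - c.1) := Nat.le_add_right _ _
    omega

lemma key_inj {L : ℕ} {T : ℕ × ℕ → ℕ} {c c' : ℕ × ℕ}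
    (hc : c.1 < L) (hc' : c'.1 < L) (h : key L T c = key L T c') :
    T c = T c' ∧ c.1 = c'.1 := by
  have h1 := key_lt_iff (T := T) hc hc'
  have h2 := key_lt_iff (T := T) hc' hc
  constructor <;> omega

/-- the rank of `c` in `s` with respect to the key `g` -/
noncomputable def rkn (s : Finset (ℕ × ℕ)) (g : ℕ × ℕ → ℕ) (c : ℕ × ℕ) : ℕ :=
  (s.filter fun c' => g c' < g c).card

lemma rkn_lt_card {s : Finset (ℕ × ℕ)} {g : ℕ × ℕ → ℕ} {c : ℕ × ℕ} (hc : c ∈ s) :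
    rkn s g c < s.card := by
  apply Finset.card_lt_card
  constructor
  · exact Finset.filter_subset _ _
  · intro hsub
    have := hsub hc
    simp at this

lemma rkn_strictMono {s : Finset (ℕ × ℕ)} {g : ℕ × ℕ → ℕ} {c c' : ℕ × ℕ}
    (hc : c ∈ s) (h : g c < g c') : rkn s g c < rkn s g c' := by
  apply Finset.card_lt_card
  refine ⟨fun x hx => ?_, fun hsub => ?_⟩
  · simp only [Finset.mem_filter] at hx ⊢
    exact ⟨hx.1, hx.2.trans h⟩
  · have := hsub (Finset.mem_filter.2 ⟨hc, h⟩)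
    simp only [Finset.mem_filter] at this
    omega

lemma rkn_surj {s : Finset (ℕ × ℕ)} {g : ℕ × ℕ → ℕ}
    (hinj : ∀ c ∈ s, ∀ c' ∈ s, g c = g c' → c = c') {k : ℕ} (hk : k < s.card) :
    ∃ c ∈ s, rkn s g c = k := by
  have hginj : ∀ c ∈ s, ∀ c' ∈ s, rkn s g c = rkn s g c' → c = c' := by
    intro c hc c' hc' h
    rcases lt_trichotomy (g c) (g c') with hlt | he | hlt
    · exact absurd h (by have := rkn_strictMono hc hlt; omega)
    · exact hinj c hc c' hc' he
    · exact absurd h (by have := rkn_strictMono hc' hlt; omega)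
  have := Finset.surj_on_of_inj_on_of_card_le (s := s) (t := Finset.range s.card)
    (fun c _ => rkn s g c) (fun c hc => Finset.mem_range.2 (rkn_lt_card hc))
    (fun c c' hc hc' h => hginj c hc c' hc' h)
    (by simp)
  obtain ⟨c, hc, hck⟩ := this k (Finset.mem_range.2 hk)
  exact ⟨c, hc, hck.symm⟩

/-- standardisation of a filling -/
noncomputable def stdOf (α β : List ℕ) (T : ℕ × ℕ → ℕ) : ℕ × ℕ → ℕ :=
  fun c => if InSkew α β c then rkn (skewCells α β) (key α.length T) c + 1 else 0

end Rank


section SITLemmas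

variable {α β : List ℕ} {S T : ℕ × ℕ → ℕ} {g : ℕ → ℕ}

lemma sit_mem_Icc (hS : IsSIT α β S) {c : ℕ × ℕ} (hc : InSkew α β c) :
    1 ≤ S c ∧ S c ≤ skewSize α β := by
  have := hS.1.mem c hc
  simpa [Finset.mem_Icc] using this

lemma sit_zero (hS : IsSIT α β S) {c : ℕ × ℕ} (hc : ¬ InSkew α β c) : S c = 0 :=
  hS.1.zero_off c hc

/-- the rank formula: any SIT equals `1 +` its own rank function -/
lemma sit_rank (hS : IsSIT α β S) {c : ℕ × ℕ} (hc : c ∈ skewCells α β) :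
    S c = rkn (skewCells α β) S c + 1 := by
  obtain ⟨h1, h2⟩ := sit_mem_Icc hS (mem_skewCells.1 hc)
  have hcard : rkn (skewCells α β) S c = S c - 1 := by
    unfold rkn
    have : ((skewCells α β).filter fun c' => S c' < S c).card
        = (Finset.Ico 1 (S c)).card := by
      apply Finset.card_nbij (i := S)
      · intro a ha
        simp only [Finset.mem_coe, Finset.mem_filter, mem_skewCells] at ha
        have := sit_mem_Icc hS ha.1
        simp only [Finset.mem_coe, Finset.mem_Ico]
        omega
      · intro a ha b hb hab
        simp only [Finset.coe_filter, Set.mem_setOf_eq, mem_skewCells] at ha hb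
        exact hS.1.inj a b ha.1 hb.1 hab
      · intro v hv
        simp only [Finset.coe_Ico, Set.mem_Ico] at hv
        obtain ⟨a, ha, hav⟩ := hS.1.surj v (Finset.mem_Icc.2 ⟨hv.1, by omega⟩)
        refine ⟨a, ?_, hav⟩
        simp only [Finset.coe_filter, Set.mem_setOf_eq, mem_skewCells]
        exact ⟨ha, by omega⟩
    rw [this, Nat.card_Ico]
  omega

/-- descent characterisation via the (unique) cells at ranks `k`, `k+1` -/
lemma des_iff (hS : IsSIT α β S) {k : ℕ} (hk1 : 1 ≤ k) (hk2 : k < skewSize α β)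
    {c c' : ℕ × ℕ} (hc : InSkew α β c) (hc' : InSkew α β c')
    (hSc : S c = k) (hSc' : S c' = k + 1) :
    k ∈ Des .Abar α β S ↔ c.1 ≤ c'.1 := by
  unfold Des
  simp only [Finset.mem_filter, Finset.mem_Icc]
  constructor
  · rintro ⟨-, d, d', hd, hd', hdk, hdk', hrel⟩
    have : d = c := hS.1.inj d c hd hc (by omega)
    have : d' = c' := hS.1.inj d' c' hd' hc' (by omega)
    subst_vars
    exact hrel
  · intro h
    exact ⟨⟨hk1, by omega⟩, c, c', hc, hc', hSc, hSc', h⟩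

/-- the run lemma: if `g` is constant on the interval of ranks `[a-1, b-1]`, rows
strictly decrease along that run -/
lemma run_lemma (hS : IsSIT α β S)
    (hmono : ∀ j k, j ≤ k → k < skewSize α β → g j ≤ g k)
    (hdes : ∀ j, 1 ≤ j → j < skewSize α β → j ∈ Des .Abar α β S → g (j-1) < g j) :
    ∀ b a, 1 ≤ a → a < b → b ≤ skewSize α β → g (a-1) = g (b-1) →
    ∀ c c', InSkew α β c → InSkew α β c' → S c = a → S c' = b → c'.1 < c.1 := by
  intro b
  induction b with
  | zero => omega
  | succ b ih =>
    intro a ha hab hbn hg c c' hc hc' hSa hSb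
    have hb1 : 1 ≤ b := by omega
    have hbn' : b < skewSize α β := by omega
    -- cell at rank b
    obtain ⟨c'', hc'', hSc''⟩ := hS.1.surj b (Finset.mem_Icc.2 ⟨hb1, by omega⟩)
    have hgb : g (b-1) = g b := by
      have h1 : g (a-1) ≤ g (b-1) := hmono _ _ (by omega) (by omega)
      have h2 : g (b-1) ≤ g b := hmono _ _ (by omega) (by omega)
      have h3 : g b = g (a-1) := by
        have : b = (b+1) - 1 := by omega
        rw [this, hg]
      omega
    have hnd : b ∉ Des .Abar α β S := fun hd => by
      have := hdes b hb1 hbn' hd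
      omega
    have hrow : c'.1 < c''.1 := by
      have := des_iff hS hb1 hbn' hc'' hc' hSc'' (by omega)
      by_contra hcon
      exact hnd (this.2 (by omega))
    rcases Nat.eq_or_lt_of_le (show a ≤ b by omega) with heq | hlt
    · have : c'' = c := hS.1.inj c'' c hc'' hc (by omega)
      rw [this] at hrow
      exact hrow
    · have hg' : g (a-1) = g (b-1) := by
        simp only [Nat.add_sub_cancel] at hg hgb
        omega
      have := ih a ha hlt (by omega) hg' c c'' hc hc'' hSa hSc''
      omega

end SITLemmas


section Transfer

variable {α β : List ℕ} {S T : ℕ × ℕ → ℕ} {g : ℕ → ℕ}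

/-- order transfer: for `T = g ∘ (S - 1)`, the rank order of `S` is the
lexicographic (entry, decreasing row) order of `T` -/
lemma order_iff (hS : IsSIT α β S)
    (hmono : ∀ j k, j ≤ k → k < skewSize α β → g j ≤ g k)
    (hdes : ∀ j, 1 ≤ j → j < skewSize α β → j ∈ Des .Abar α β S → g (j-1) < g j)
    (hT : ∀ c, InSkew α β c → T c = g (S c - 1))
    {c c' : ℕ × ℕ} (hc : InSkew α β c) (hc' : InSkew α β c') (hne : c ≠ c') :
    S c < S c' ↔ (T c < T c' ∨ (T c = T c' ∧ c'.1 < c.1)) := by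
  obtain ⟨h1, h2⟩ := sit_mem_Icc hS hc
  obtain ⟨h1', h2'⟩ := sit_mem_Icc hS hc'
  have hSne : S c ≠ S c' := fun h => hne (hS.1.inj c c' hc hc' h)
  rw [hT c hc, hT c' hc']
  constructor
  · intro h
    have hle : g (S c - 1) ≤ g (S c' - 1) := hmono _ _ (by omega) (by omega)
    rcases eq_or_lt_of_le hle with he | hlt
    · exact Or.inr ⟨he, run_lemma hS hmono hdes (S c') (S c) h1 h h2'
        (by rw [he]) c c' hc hc' rfl rfl⟩
    · exact Or.inl hlt
  · rintro (h | ⟨he, hrow⟩)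
    · rcases lt_trichotomy (S c) (S c') with hlt | heq | hlt
      · exact hlt
      · exact absurd heq hSne
      · have := hmono (S c' - 1) (S c - 1) (by omega) (by omega)
        omega
    · rcases lt_trichotomy (S c) (S c') with hlt | heq | hlt
      · exact hlt
      · exact absurd heq hSne
      · exact absurd (run_lemma hS hmono hdes (S c) (S c') h1' hlt h2
          he.symm c' c hc' hc rfl rfl) (by omega)

/-- the filling `g ∘ (S - 1)` has strict first column and strict rows -/
lemma strict_of_sit (hS : IsSIT α β S)
    (hmono : ∀ j k, j ≤ k → k < skewSize α β → g j ≤ g k)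
    (hdes : ∀ j, 1 ≤ j → j < skewSize α β → j ∈ Des .Abar α β S → g (j-1) < g j)
    (hT : ∀ c, InSkew α β c → T c = g (S c - 1)) :
    FirstColStrict α β T ∧ RowsStrict α β T := by
  constructor
  · intro i i' hii' hc hc'
    have hne : ((i : ℕ), (0 : ℕ)) ≠ (i', 0) := fun h => by
      have h1 : i = i' := congrArg Prod.fst h
      omega
    rcases (order_iff hS hmono hdes hT hc hc' hne).1 (hS.2.2 i i' hii' hc hc') with
      h | ⟨he, hrow⟩
    · exact h
    · have : i' < i := hrow
      omega
  · intro i j j' hjj' hc hc'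
    have hne : ((i : ℕ), j) ≠ (i, j') := fun h => by
      have h1 : j = j' := congrArg Prod.snd h
      omega
    rcases (order_iff hS hmono hdes hT hc hc' hne).1 (hS.2.1 i j j' hjj' hc hc') with
      h | ⟨he, hrow⟩
    · exact h
    · have : i < i := hrow
      omega

/-- the standardisation of `g ∘ (S - 1)` recovers `S` -/
lemma std_eq (hS : IsSIT α β S)
    (hmono : ∀ j k, j ≤ k → k < skewSize α β → g j ≤ g k)
    (hdes : ∀ j, 1 ≤ j → j < skewSize α β → j ∈ Des .Abar α β S → g (j-1) < g j)
    (hT : ∀ c, InSkew α β c → T c = g (S c - 1)) (c : ℕ × ℕ) :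
    stdOf α β T c = S c := by
  unfold stdOf
  by_cases hc : InSkew α β c
  · rw [if_pos hc, sit_rank hS (mem_skewCells.2 hc)]
    congr 1
    unfold rkn
    congr 1
    apply Finset.filter_congr
    intro c' hc'
    have hc'in := mem_skewCells.1 hc'
    by_cases hne : c' = c
    · subst hne; simp
    · rw [key_lt_iff (inSkew_iff.1 hc'in).1 (inSkew_iff.1 hc).1,
        ← order_iff hS hmono hdes hT hc'in hc hne]
  · rw [if_neg hc, sit_zero hS hc]

/-- content re-indexing -/
lemma content_eq (hS : IsSIT α β S)
    (hT : ∀ c, InSkew α β c → T c = g (S c - 1)) :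
    ∑ c ∈ skewCells α β, Finsupp.single (T c) (1 : ℕ)
      = ∑ j ∈ Finset.range (skewSize α β), Finsupp.single (g j) 1 := by
  apply Finset.sum_nbij (i := fun c => S c - 1)
  · intro c hc
    have := sit_mem_Icc hS (mem_skewCells.1 hc)
    simp only [Finset.mem_range]
    omega
  · intro c hc c' hc' h
    simp only [Finset.mem_coe, mem_skewCells] at hc hc'
    have h1 := sit_mem_Icc hS hc
    have h2 := sit_mem_Icc hS hc'
    have h' : S c - 1 = S c' - 1 := h
    exact hS.1.inj c c' hc hc' (by omega)
  · intro j hj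
    simp only [Finset.coe_range, Set.mem_Iio] at hj
    obtain ⟨c, hc, hSc⟩ := hS.1.surj (j+1) (Finset.mem_Icc.2 ⟨by omega, by omega⟩)
    exact ⟨c, by simpa [mem_skewCells] using hc, show S c - 1 = j by omega⟩
  · intro c hc
    rw [hT c (mem_skewCells.1 hc)]

end Transfer


section Standardise

variable {α β : List ℕ} {T : ℕ × ℕ → ℕ}

lemma key_injOn (hrow : RowsStrict α β T) :
    ∀ c, InSkew α β c → ∀ c', InSkew α β c' →
      key α.length T c = key α.length T c' → c = c' := by
  intro c hc c' hc' h
  obtain ⟨hTe, hre⟩ := key_inj (inSkew_iff.1 hc).1 (inSkew_iff.1 hc').1 h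
  obtain ⟨i, j⟩ := c
  obtain ⟨i', j'⟩ := c'
  simp only at hTe hre
  subst hre
  rcases lt_trichotomy j j' with hj | hj | hj
  · exact absurd (hrow i j j' hj hc hc') (by omega)
  · rw [hj]
  · exact absurd (hrow i j' j hj hc' hc) (by omega)

lemma stdOf_lt_iff (hrow : RowsStrict α β T) {c c' : ℕ × ℕ}
    (hc : InSkew α β c) (hc' : InSkew α β c') :
    stdOf α β T c < stdOf α β T c' ↔ key α.length T c < key α.length T c' := by
  unfold stdOf
  rw [if_pos hc, if_pos hc']
  constructor
  · intro h
    rcases lt_trichotomy (key α.length T c) (key α.length T c') with h1 | h1 | h1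
    · exact h1
    · exact absurd (key_injOn hrow c hc c' hc' h1) (by
        intro he
        rw [he] at h
        omega)
    · have := rkn_strictMono (g := key α.length T) (mem_skewCells.2 hc') h1
      omega
  · intro h
    have := rkn_strictMono (g := key α.length T) (mem_skewCells.2 hc) h
    omega

lemma stdOf_isSIT (hsub : SubComp β α)
    (hfc : FirstColStrict α β T) (hrow : RowsStrict α β T) :
    IsSIT α β (stdOf α β T) := by
  have hL : ∀ c, InSkew α β c → c.1 < α.length := fun c hc => (inSkew_iff.1 hc).1
  refine ⟨⟨fun c hc => if_neg hc, ?_, ?_, ?_⟩, ?_, ?_⟩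
  · intro c hc
    unfold stdOf
    rw [if_pos hc]
    have := rkn_lt_card (g := key α.length T) (mem_skewCells.2 hc)
    rw [card_skewCells hsub] at this
    simp only [Finset.mem_Icc]
    omega
  · intro c c' hc hc' h
    unfold stdOf at h
    rw [if_pos hc, if_pos hc'] at h
    have h1 := stdOf_lt_iff hrow hc hc'
    have h2 := stdOf_lt_iff hrow hc' hc
    unfold stdOf at h1 h2
    rw [if_pos hc, if_pos hc'] at h1 h2
    rcases lt_trichotomy (key α.length T c) (key α.length T c') with hk | hk | hk
    · exact absurd (h1.2 hk) (by omega)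
    · exact key_injOn hrow c hc c' hc' hk
    · exact absurd (h2.2 hk) (by omega)
  · intro v hv
    simp only [Finset.mem_Icc] at hv
    have hvn : v - 1 < (skewCells α β).card := by
      rw [card_skewCells hsub]
      omega
    obtain ⟨c, hc, hrk⟩ := rkn_surj (g := key α.length T)
      (fun c hc c' hc' h => key_injOn hrow c (mem_skewCells.1 hc) c'
        (mem_skewCells.1 hc') h) hvn
    refine ⟨c, mem_skewCells.1 hc, ?_⟩
    unfold stdOf
    rw [if_pos (mem_skewCells.1 hc), hrk]
    omega
  · intro i j j' hjj' hc hc'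
    rw [stdOf_lt_iff hrow hc hc', key_lt_iff (hL _ hc) (hL _ hc')]
    exact Or.inl (hrow i j j' hjj' hc hc')
  · intro i i' hii' hc hc'
    rw [stdOf_lt_iff hrow hc hc', key_lt_iff (hL _ hc) (hL _ hc')]
    exact Or.inl (hfc i i' hii' hc hc')

/-- the weakly increasing word of a filling -/
noncomputable def fOf (α β : List ℕ) (T : ℕ × ℕ → ℕ) (j : ℕ) : ℕ :=
  ∑ c ∈ (skewCells α β).filter (fun c => stdOf α β T c = j + 1), T c

lemma fOf_eq (hrow : RowsStrict α β T) {c : ℕ × ℕ} (hc : InSkew α β c) {j : ℕ}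
    (hj : stdOf α β T c = j + 1) (hsub : SubComp β α) (hfc : FirstColStrict α β T) :
    fOf α β T j = T c := by
  have hS := stdOf_isSIT hsub hfc hrow
  have : (skewCells α β).filter (fun c' => stdOf α β T c' = j + 1) = {c} := by
    ext c'
    simp only [Finset.mem_filter, Finset.mem_singleton, mem_skewCells]
    constructor
    · rintro ⟨h1, h2⟩
      exact hS.1.inj c' c h1 hc (by omega)
    · rintro rfl
      exact ⟨hc, hj⟩
  rw [fOf, this, Finset.sum_singleton]

end Standardise


section FOf

variable {α β : List ℕ} {T : ℕ × ℕ → ℕ}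

lemma fOf_recover (hsub : SubComp β α) (hfc : FirstColStrict α β T)
    (hrow : RowsStrict α β T) :
    ∀ c, InSkew α β c → T c = fOf α β T (stdOf α β T c - 1) := by
  intro c hc
  have hS := stdOf_isSIT hsub hfc hrow
  have h1 := sit_mem_Icc hS hc
  exact (fOf_eq hrow hc (by omega) hsub hfc).symm

lemma fOf_mono (hsub : SubComp β α) (hfc : FirstColStrict α β T)
    (hrow : RowsStrict α β T) :
    ∀ j k, j ≤ k → k < skewSize α β → fOf α β T j ≤ fOf α β T k := by
  intro j k hjk hk
  have hS := stdOf_isSIT hsub hfc hrow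
  obtain ⟨cj, hcj, hj⟩ := hS.1.surj (j+1) (Finset.mem_Icc.2 ⟨by omega, by omega⟩)
  obtain ⟨ck, hck, hk'⟩ := hS.1.surj (k+1) (Finset.mem_Icc.2 ⟨by omega, by omega⟩)
  rw [fOf_eq hrow hcj hj hsub hfc, fOf_eq hrow hck hk' hsub hfc]
  rcases eq_or_lt_of_le hjk with he | hlt
  · subst he
    have : cj = ck := hS.1.inj cj ck hcj hck (by omega)
    rw [this]
  · have hst : stdOf α β T cj < stdOf α β T ck := by omega
    have := (stdOf_lt_iff hrow hcj hck).1 hst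
    rw [key_lt_iff (inSkew_iff.1 hcj).1 (inSkew_iff.1 hck).1] at this
    omega

lemma fOf_des (hsub : SubComp β α) (hfc : FirstColStrict α β T)
    (hrow : RowsStrict α β T) :
    ∀ j, 1 ≤ j → j < skewSize α β → j ∈ Des .Abar α β (stdOf α β T) →
      fOf α β T (j-1) < fOf α β T j := by
  intro j hj1 hjn hdes
  unfold Des at hdes
  simp only [Finset.mem_filter, Finset.mem_Icc] at hdes
  obtain ⟨-, c, c', hc, hc', h1, h2, hrel⟩ := hdes
  have hrel' : c.1 ≤ c'.1 := hrel
  rw [fOf_eq hrow hc (by omega) hsub hfc, fOf_eq hrow hc' h2 hsub hfc]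
  have hst : stdOf α β T c < stdOf α β T c' := by omega
  have := (stdOf_lt_iff hrow hc hc').1 hst
  rw [key_lt_iff (inSkew_iff.1 hc).1 (inSkew_iff.1 hc').1] at this
  omega

lemma fOf_pos (hsub : SubComp β α) (hfc : FirstColStrict α β T)
    (hrow : RowsStrict α β T) (hpos : ∀ c, InSkew α β c → 1 ≤ T c) :
    ∀ j, j < skewSize α β → 1 ≤ fOf α β T j := by
  intro j hj
  have hS := stdOf_isSIT hsub hfc hrow
  obtain ⟨c, hc, hj'⟩ := hS.1.surj (j+1) (Finset.mem_Icc.2 ⟨by omega, by omega⟩)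
  rw [fOf_eq hrow hc hj' hsub hfc]
  exact hpos c hc

end FOf


section FinAux

/-- extension of `f : Fin n → ℕ` by zero -/
def ext0 (n : ℕ) (f : Fin n → ℕ) : ℕ → ℕ := fun k => if h : k < n then f ⟨k, h⟩ else 0

/-- the filling associated to a standard tableau `S` and a word `f` -/
noncomputable def phiMap (α β : List ℕ) (n : ℕ) (S : ℕ × ℕ → ℕ) (f : Fin n → ℕ) :
    ℕ × ℕ → ℕ :=
  fun c => if InSkew α β c then ext0 n f (S c - 1) else 0

lemma val_mem_support {γ : Type*} {s : Finset γ} {g : γ → ℕ} {d : ℕ →₀ ℕ}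
    (h : (∑ c ∈ s, Finsupp.single (g c) 1) = d) {c : γ} (hc : c ∈ s) :
    g c ∈ d.support := by
  rw [Finsupp.mem_support_iff, ← h]
  have happ : (∑ c' ∈ s, Finsupp.single (g c') (1:ℕ)) (g c)
      = ∑ c' ∈ s, (Finsupp.single (g c') (1:ℕ)) (g c) := by
    rw [Finsupp.finset_sum_apply]
  rw [happ]
  have : (Finsupp.single (g c) (1:ℕ)) (g c) = 1 := by simp
  have hle : (Finsupp.single (g c) (1:ℕ)) (g c)
      ≤ ∑ c' ∈ s, (Finsupp.single (g c') (1:ℕ)) (g c) :=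
    Finset.single_le_sum (f := fun c' => (Finsupp.single (g c') (1:ℕ)) (g c))
      (fun i _ => Nat.zero_le _) hc
  omega

lemma finite_zero_off (s : Finset (ℕ × ℕ)) (F : Finset ℕ) :
    {T : ℕ × ℕ → ℕ | (∀ c, c ∉ s → T c = 0) ∧ ∀ c ∈ s, T c ∈ F}.Finite := by
  apply Set.Finite.of_finite_image (f := fun T => (fun c : s => T c.1))
  · apply Set.Finite.subset (Set.Finite.pi (fun _ : s => F.finite_toSet))
    rintro g ⟨T, hT, rfl⟩
    rw [Set.mem_univ_pi]
    intro c
    exact hT.2 c.1 c.2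
  · intro T hT T' hT' h
    funext c
    by_cases hc : c ∈ s
    · exact congrFun h ⟨c, hc⟩
    · rw [hT.1 c hc, hT'.1 c hc]

lemma finite_fin (n : ℕ) (F : Finset ℕ) : {f : Fin n → ℕ | ∀ j, f j ∈ F}.Finite := by
  apply Set.Finite.subset (Set.Finite.pi (fun _ : Fin n => F.finite_toSet))
  intro f hf
  rw [Set.mem_univ_pi]
  exact hf

lemma sum_fin_ext0 (n : ℕ) (f : Fin n → ℕ) :
    (∑ j, Finsupp.single (f j) (1:ℕ)) = ∑ j ∈ Finset.range n, Finsupp.single (ext0 n f j) 1 := by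
  rw [← Fin.sum_univ_eq_sum_range (fun j => Finsupp.single (ext0 n f j) (1:ℕ)) n]
  apply Finset.sum_congr rfl
  intro j _
  congr 1
  unfold ext0
  rw [dif_pos j.isLt]

end FinAux


section Fiber

variable {α β : List ℕ}

lemma fiber_card (hsub : SubComp β α) (d : ℕ →₀ ℕ) {S : ℕ × ℕ → ℕ} (hS : IsSIT α β S)
    (hAfin : {f : Fin (skewSize α β) → ℕ |
        (∀ j, 1 ≤ f j) ∧ (∀ j k : Fin (skewSize α β), j ≤ k → f j ≤ f k) ∧
        (∀ (j : ℕ) (_ : 1 ≤ j) (h2 : j < skewSize α β),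
          j ∈ Des .Abar α β S → f ⟨j - 1, by omega⟩ < f ⟨j, h2⟩) ∧
        (∑ j, Finsupp.single (f j) 1) = d}.Finite)
    (hBfin : {T : ℕ × ℕ → ℕ |
        (∀ c, c ∉ skewCells α β → T c = 0) ∧ (∀ c ∈ skewCells α β, 1 ≤ T c) ∧
        (FirstColStrict α β T ∧ RowsStrict α β T) ∧
        (∑ c ∈ skewCells α β, Finsupp.single (T c) 1) = d}.Finite) :
    hAfin.toFinset.card
      = (hBfin.toFinset.filter (fun T => stdOf α β T = S)).card := by
  apply Finset.card_nbij (i := fun f => phiMap α β (skewSize α β) S f)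
  · -- maps into the fiber
    intro f hf
    rw [Finset.mem_coe, Set.Finite.mem_toFinset] at hf
    obtain ⟨hf1, hf2, hf3, hf4⟩ := hf
    have hgm : ∀ j k, j ≤ k → k < skewSize α β →
        ext0 (skewSize α β) f j ≤ ext0 (skewSize α β) f k := by
      intro j k hjk hk
      unfold ext0
      rw [dif_pos hk, dif_pos (lt_of_le_of_lt hjk hk)]
      exact hf2 _ _ (Fin.mk_le_mk.2 hjk)
    have hgd : ∀ j, 1 ≤ j → j < skewSize α β → j ∈ Des .Abar α β S →
        ext0 (skewSize α β) f (j - 1) < ext0 (skewSize α β) f j := by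
      intro j h1 h2 hD
      unfold ext0
      rw [dif_pos h2, dif_pos (show j - 1 < skewSize α β by omega)]
      exact hf3 j h1 h2 hD
    have hT : ∀ c, InSkew α β c →
        phiMap α β (skewSize α β) S f c = ext0 (skewSize α β) f (S c - 1) :=
      fun c hc => if_pos hc
    have hstrict := strict_of_sit hS hgm hgd hT
    rw [Finset.mem_coe, Finset.mem_filter, Set.Finite.mem_toFinset]
    beta_reduce
    refine ⟨⟨?_, ?_, hstrict, ?_⟩, funext fun c => std_eq hS hgm hgd hT c⟩
    · exact fun c hc => if_neg (fun h => hc (mem_skewCells.2 h))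
    · intro c hc
      have hin := mem_skewCells.1 hc
      rw [hT c hin]
      have hmem := sit_mem_Icc hS hin
      unfold ext0
      rw [dif_pos (show S c - 1 < skewSize α β by omega)]
      exact hf1 _
    · rw [content_eq hS hT, ← sum_fin_ext0, hf4]
  · -- injective
    intro f hf f' hf' h
    simp only [Finset.mem_coe] at hf hf'
    funext j
    obtain ⟨c, hc, hSc⟩ := hS.1.surj ((j : ℕ) + 1)
      (Finset.mem_Icc.2 ⟨by omega, by omega⟩)
    have h1 : phiMap α β (skewSize α β) S f c = phiMap α β (skewSize α β) S f' c :=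
      congrFun h c
    unfold phiMap ext0 at h1
    rw [if_pos hc, if_pos hc] at h1
    have he : S c - 1 = (j : ℕ) := by omega
    rw [he, dif_pos j.isLt, dif_pos j.isLt] at h1
    simpa using h1
  · -- surjective onto the fiber
    intro T hT'
    simp only [Finset.coe_filter, Set.mem_setOf_eq, Set.Finite.mem_toFinset] at hT'
    obtain ⟨⟨hz, hpos, ⟨hfc, hrow⟩, hcont⟩, hstd⟩ := hT'
    have hS' := stdOf_isSIT hsub hfc hrow
    refine ⟨fun j : Fin (skewSize α β) => fOf α β T (j : ℕ), ?_, ?_⟩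
    · rw [Finset.mem_coe, Set.Finite.mem_toFinset]
      refine ⟨?_, ?_, ?_, ?_⟩
      · exact fun j => fOf_pos hsub hfc hrow
          (fun c hc => hpos c (mem_skewCells.2 hc)) (j : ℕ) j.isLt
      · exact fun j k hjk => fOf_mono hsub hfc hrow (j : ℕ) (k : ℕ) hjk k.isLt
      · intro j h1 h2 hD
        exact fOf_des hsub hfc hrow j h1 h2 (by rw [hstd]; exact hD)
      · rw [← hcont, content_eq hS' (fOf_recover hsub hfc hrow),
          ← Fin.sum_univ_eq_sum_range (fun j => Finsupp.single (fOf α β T j) (1:ℕ))]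
    · funext c
      unfold phiMap
      beta_reduce
      by_cases hc : InSkew α β c
      · rw [if_pos hc]
        have hmem := sit_mem_Icc hS' hc
        rw [hstd] at hmem
        unfold ext0
        rw [dif_pos (show S c - 1 < skewSize α β by omega)]
        have := fOf_recover hsub hfc hrow c hc
        rw [hstd] at this
        exact this.symm
      · rw [if_neg hc]
        exact (hz c (fun h => hc (mem_skewCells.1 h))).symm

end Fiber


section Main

variable {α β : List ℕ}

lemma nat_card_eq {X : Type*} {p : X → Prop} (h : {x | p x}.Finite) :
    Nat.card {x // p x} = h.toFinset.card := by
  rw [← Set.ncard_eq_toFinset_card _ h, ← Nat.card_coe_set_eq]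
  exact Nat.card_congr (Equiv.subtypeEquivRight fun _ => Iff.rfl)

lemma main_count (hsub : SubComp β α) (d : ℕ →₀ ℕ)
    (hSfin : {S : ℕ × ℕ → ℕ | IsSIT α β S}.Finite) :
    ∑ S ∈ hSfin.toFinset, Nat.card {f : Fin (skewSize α β) → ℕ //
        (∀ j, 1 ≤ f j) ∧ (∀ j k : Fin (skewSize α β), j ≤ k → f j ≤ f k) ∧
        (∀ (j : ℕ) (_ : 1 ≤ j) (h2 : j < skewSize α β),
          j ∈ Des .Abar α β S → f ⟨j - 1, by omega⟩ < f ⟨j, h2⟩) ∧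
        (∑ j, Finsupp.single (f j) 1) = d}
      = Nat.card {T : ℕ × ℕ → ℕ //
        (∀ c, c ∉ skewCells α β → T c = 0) ∧ (∀ c ∈ skewCells α β, 1 ≤ T c) ∧
        (FirstColStrict α β T ∧ RowsStrict α β T) ∧
        (∑ c ∈ skewCells α β, Finsupp.single (T c) 1) = d} := by
  have hBfin : {T : ℕ × ℕ → ℕ |
      (∀ c, c ∉ skewCells α β → T c = 0) ∧ (∀ c ∈ skewCells α β, 1 ≤ T c) ∧
      (FirstColStrict α β T ∧ RowsStrict α β T) ∧
      (∑ c ∈ skewCells α β, Finsupp.single (T c) 1) = d}.Finite :=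
    (finite_zero_off (skewCells α β) d.support).subset
      (fun T hT => ⟨hT.1, fun c hc => val_mem_support hT.2.2.2 hc⟩)
  have hAfin : ∀ S : ℕ × ℕ → ℕ, {f : Fin (skewSize α β) → ℕ |
      (∀ j, 1 ≤ f j) ∧ (∀ j k : Fin (skewSize α β), j ≤ k → f j ≤ f k) ∧
      (∀ (j : ℕ) (_ : 1 ≤ j) (h2 : j < skewSize α β),
        j ∈ Des .Abar α β S → f ⟨j - 1, by omega⟩ < f ⟨j, h2⟩) ∧
      (∑ j, Finsupp.single (f j) 1) = d}.Finite := fun S =>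
    (finite_fin (skewSize α β) d.support).subset
      (fun f hf j => val_mem_support hf.2.2.2 (Finset.mem_univ j))
  rw [nat_card_eq hBfin,
    Finset.card_eq_sum_card_fiberwise (f := stdOf α β) (t := hSfin.toFinset)
      (fun T hT => by
        rw [Finset.mem_coe, Set.Finite.mem_toFinset] at hT ⊢
        exact stdOf_isSIT hsub hT.2.2.1.1 hT.2.2.1.2)]
  refine Finset.sum_congr rfl fun S hSmem => ?_
  rw [nat_card_eq (hAfin S)]
  exact fiber_card hsub d (hSfin.mem_toFinset.1 hSmem) (hAfin S) hBfin

end Main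


/-- `Σ_{T ∈ SIT(α/β)} F_{comp(Des_{Ā*}(T))}` equals the generating function of
all fillings of `α/β` with column-1 entries strictly increasing bottom to top and all rows
strictly increasing left to right. -/
theorem skew_Abar_generating_function (α β : List ℕ)
    (hα : IsComposition α) (hβ : IsComposition β) (hsub : SubComp β α)
    (hN : 1 ≤ skewSize α β) :
    (∑ᶠ (T : ℕ × ℕ → ℕ) (_ : IsSIT α β T), Fund (skewSize α β) (Des .Abar α β T)) =
      genF (skewCells α β) (fun T => FirstColStrict α β T ∧ RowsStrict α β T) := by
  classical
  have hSfin : {S : ℕ × ℕ → ℕ | IsSIT α β S}.Finite := by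
    apply (finite_zero_off (skewCells α β) (Finset.Icc 1 (skewSize α β))).subset
    intro S hS
    exact ⟨fun c hc => sit_zero hS (fun h => hc (mem_skewCells.2 h)),
           fun c hc => hS.1.mem c (mem_skewCells.1 hc)⟩
  have hrw : (∑ᶠ (T : ℕ × ℕ → ℕ) (_ : IsSIT α β T),
        Fund (skewSize α β) (Des .Abar α β T))
      = ∑ S ∈ hSfin.toFinset, Fund (skewSize α β) (Des .Abar α β S) := by
    have h1 : (∑ᶠ (T : ℕ × ℕ → ℕ) (_ : IsSIT α β T),
          Fund (skewSize α β) (Des .Abar α β T))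
        = ∑ᶠ T ∈ {S : ℕ × ℕ → ℕ | IsSIT α β S},
            Fund (skewSize α β) (Des .Abar α β T) := rfl
    rw [h1]
    have h2 : ({S : ℕ × ℕ → ℕ | IsSIT α β S}) = (↑hSfin.toFinset : Set (ℕ × ℕ → ℕ)) :=
      hSfin.coe_toFinset.symm
    calc ∑ᶠ T ∈ {S : ℕ × ℕ → ℕ | IsSIT α β S},
            Fund (skewSize α β) (Des Variant.Abar α β T)
        = ∑ᶠ T ∈ (↑hSfin.toFinset : Set (ℕ × ℕ → ℕ)),
            Fund (skewSize α β) (Des Variant.Abar α β T) := by rw [hSfin.coe_toFinset]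
      _ = ∑ S ∈ hSfin.toFinset, Fund (skewSize α β) (Des Variant.Abar α β S) :=
          finsum_mem_coe_finset _ _
  rw [hrw]
  refine MvPowerSeries.ext fun d => ?_
  rw [map_sum]
  have hc1 : ∀ F : MvPowerSeries ℕ ℚ, (MvPowerSeries.coeff d) F = F d := fun _ => rfl
  simp only [hc1, Fund, genF]
  exact_mod_cast main_count hsub d hSfin

end ImmaculateSkew
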